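/- Let κ∈ℝ, q>0, b₁∈{−1,1}, F₁,F₂:[0,q)→ℝ, F₃∈ℝ, and let G be the associated PFSM kernel. Fix v∈ℝ. Then the following are equivalent: (a) there exist a sequence (cₙ) of positive reals with cₙ≠1 for all n and cₙ→1, and reals aₙ, bₙ≠0, dₙ such that for every n, G(v, cₙu) = bₙ·G(v, u+aₙ) + dₙ for Lebesgue-almost every u∈ℝ; (b) the same statement holds with v replaced by 0, i.e. there exist a sequence (c̃ₙ) of positive reals with c̃ₙ≠1 and c̃ₙ→1, and reals ãₙ, b̃ₙ≠0, d̃ₙ such that for every n, G(0, c̃ₙu) = b̃ₙ·G(0, u+ãₙ) + d̃ₙ for Lebesgue-almost every u∈ℝ. -/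

import Mathlib

open MeasureTheory

/-- `{x}_a = x - a⌊x/a⌋`, the fractional part with period `a`. -/
noncomputable def fpart (a x : ℝ) : ℝ := x - a * ⌊x / a⌋

/-- `u₊^κ`. -/
noncomputable def pPow (κ u : ℝ) : ℝ := if 0 < u then u ^ κ else 0

/-- `u₋^κ`. -/
noncomputable def mPow (κ u : ℝ) : ℝ := if u ≤ 0 then |u| ^ κ else 0

/-- The PFSM kernel `G(v,u)` associated with `κ, q, b₁, F₁, F₂, F₃`. -/
noncomputable def pfsmKernel (κ q b₁ : ℝ) (F₁ F₂ : ℝ → ℝ) (F₃ : ℝ) (v u : ℝ) : ℝ :=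
  if u = 0 then 0 else
    b₁ ^ ⌊(v + Real.log |u|) / q⌋ *
      (F₁ (fpart q (v + Real.log |u|)) * pPow κ u
        + F₂ (fpart q (v + Real.log |u|)) * mPow κ u)
    + (if b₁ = 1 then (1:ℝ) else 0) * (if κ = 0 then (1:ℝ) else 0) * F₃ * Real.log |u|

lemma ae_comp_mul_left {P : ℝ → Prop} {t : ℝ} (ht : t ≠ 0)
    (h : ∀ᵐ u : ℝ ∂volume, P u) : ∀ᵐ u : ℝ ∂volume, P (t * u) := by
  rw [ae_iff] at h ⊢
  have he : {u : ℝ | ¬ P (t * u)} = (t * ·) ⁻¹' {u | ¬ P u} := rfl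
  rw [he, Real.volume_preimage_mul_left ht, h, mul_zero]

lemma exp_mul_pPow {κ v w : ℝ} :
    Real.exp (v * κ) * pPow κ (Real.exp (-v) * w) = pPow κ w := by
  unfold pPow
  have hpos : (0 : ℝ) < Real.exp (-v) := Real.exp_pos _
  by_cases hw : 0 < w
  · rw [if_pos (mul_pos hpos hw), if_pos hw,
      Real.mul_rpow hpos.le hw.le, ← Real.exp_mul]
    rw [← mul_assoc, ← Real.exp_add]
    ring_nf
    rw [Real.exp_zero, one_mul]
  · rw [if_neg hw, if_neg (fun hc => hw (by nlinarith)), mul_zero]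

lemma exp_mul_mPow {κ v w : ℝ} :
    Real.exp (v * κ) * mPow κ (Real.exp (-v) * w) = mPow κ w := by
  unfold mPow
  have hpos : (0 : ℝ) < Real.exp (-v) := Real.exp_pos _
  by_cases hw : w ≤ 0
  · rw [if_pos (mul_nonpos_of_nonneg_of_nonpos hpos.le hw), if_pos hw,
      abs_mul, abs_of_pos hpos, Real.mul_rpow hpos.le (abs_nonneg w), ← Real.exp_mul]
    rw [← mul_assoc, ← Real.exp_add]
    ring_nf
    rw [Real.exp_zero, one_mul]
  · rw [if_neg hw, if_neg (fun hc => hw (by nlinarith)), mul_zero]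

lemma pfsm_shift (κ q b₁ : ℝ) (F₁ F₂ : ℝ → ℝ) (F₃ : ℝ) (v : ℝ) {w : ℝ} (hw : w ≠ 0) :
    pfsmKernel κ q b₁ F₁ F₂ F₃ 0 w
      = Real.exp (v * κ) * pfsmKernel κ q b₁ F₁ F₂ F₃ v (Real.exp (-v) * w)
        + (if b₁ = 1 then (1:ℝ) else 0) * (if κ = 0 then (1:ℝ) else 0) * F₃ * v := by
  have hpos : (0 : ℝ) < Real.exp (-v) := Real.exp_pos _
  have htw : Real.exp (-v) * w ≠ 0 := mul_ne_zero hpos.ne' hw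
  unfold pfsmKernel
  rw [if_neg hw, if_neg htw]
  have hlog : Real.log |Real.exp (-v) * w| = Real.log |w| - v := by
    rw [abs_mul, abs_of_pos hpos, Real.log_mul hpos.ne' (abs_ne_zero.mpr hw),
      Real.log_exp]
    ring
  rw [hlog]
  have h1 : v + (Real.log |w| - v) = Real.log |w| := by ring
  rw [h1, zero_add]
  set χ : ℝ := (if b₁ = 1 then (1:ℝ) else 0) * (if κ = 0 then (1:ℝ) else 0) * F₃ with hχdef
  have hχ : Real.exp (v * κ) * χ = χ := by
    by_cases hκ : κ = 0
    · rw [hκ, mul_zero, Real.exp_zero, one_mul]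
    · rw [hχdef, if_neg hκ]; ring
  set B : ℝ := b₁ ^ ⌊Real.log |w| / q⌋
  set F1 : ℝ := F₁ (fpart q (Real.log |w|))
  set F2 : ℝ := F₂ (fpart q (Real.log |w|))
  have hP := exp_mul_pPow (κ := κ) (v := v) (w := w)
  have hM := exp_mul_mPow (κ := κ) (v := v) (w := w)
  linear_combination (B * F1) * hP.symm + (B * F2) * hM.symm
    + (Real.log |w| - v) * hχ.symm

lemma transfer (Gv H : ℝ → ℝ) (lam t C : ℝ) (hlam : lam ≠ 0) (ht : 0 < t)
    (hrel : ∀ w : ℝ, w ≠ 0 → H w = lam * Gv (t * w) + C)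
    (h : ∃ c a b d : ℕ → ℝ, (∀ n, 0 < c n) ∧ (∀ n, c n ≠ 1) ∧
        Filter.Tendsto c Filter.atTop (nhds 1) ∧ (∀ n, b n ≠ 0) ∧
        ∀ n, ∀ᵐ u : ℝ ∂volume, Gv (c n * u) = b n * Gv (u + a n) + d n) :
    ∃ c a b d : ℕ → ℝ, (∀ n, 0 < c n) ∧ (∀ n, c n ≠ 1) ∧
        Filter.Tendsto c Filter.atTop (nhds 1) ∧ (∀ n, b n ≠ 0) ∧
        ∀ n, ∀ᵐ u : ℝ ∂volume, H (c n * u) = b n * H (u + a n) + d n := by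
  obtain ⟨c, a, b, d, hc, hc1, hct, hb, hae⟩ := h
  refine ⟨c, fun n => a n / t, b, fun n => lam * d n + C * (1 - b n),
    hc, hc1, hct, hb, fun n => ?_⟩
  have h1 : ∀ᵐ u : ℝ ∂volume, Gv (c n * (t * u)) = b n * Gv (t * u + a n) + d n :=
    ae_comp_mul_left ht.ne' (hae n)
  have h2 : ∀ᵐ u : ℝ ∂volume, u ≠ 0 := by
    rw [ae_iff]
    have : {u : ℝ | ¬ u ≠ 0} = {(0 : ℝ)} := by ext x; simp
    rw [this]; exact Real.volume_singleton
  have h3 : ∀ᵐ u : ℝ ∂volume, u + a n / t ≠ 0 := by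
    rw [ae_iff]
    have : {u : ℝ | ¬ u + a n / t ≠ 0} = {-(a n / t)} := by
      ext x; simp [eq_neg_iff_add_eq_zero]
    rw [this]; exact Real.volume_singleton
  filter_upwards [h1, h2, h3] with u hu hu0 hus
  have hcu : c n * u ≠ 0 := mul_ne_zero (hc n).ne' hu0
  have e1 : H (c n * u) = lam * Gv (t * (c n * u)) + C := hrel _ hcu
  have e2 : H (u + a n / t) = lam * Gv (t * (u + a n / t)) + C := hrel _ hus
  have e3 : t * (c n * u) = c n * (t * u) := by ring
  have e4 : t * (u + a n / t) = t * u + a n := by rw [mul_add, mul_div_cancel₀ _ ht.ne']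
  rw [e1, e3, hu, e2, e4]
  ring

theorem stmt4 (κ q b₁ : ℝ) (hq : 0 < q) (hb : b₁ = 1 ∨ b₁ = -1)
    (F₁ F₂ : ℝ → ℝ) (F₃ : ℝ) (v : ℝ) :
    (∃ c a b d : ℕ → ℝ, (∀ n, 0 < c n) ∧ (∀ n, c n ≠ 1) ∧
        Filter.Tendsto c Filter.atTop (nhds 1) ∧ (∀ n, b n ≠ 0) ∧
        ∀ n, ∀ᵐ u : ℝ ∂volume,
          pfsmKernel κ q b₁ F₁ F₂ F₃ v (c n * u)
            = b n * pfsmKernel κ q b₁ F₁ F₂ F₃ v (u + a n) + d n)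
    ↔
    (∃ c a b d : ℕ → ℝ, (∀ n, 0 < c n) ∧ (∀ n, c n ≠ 1) ∧
        Filter.Tendsto c Filter.atTop (nhds 1) ∧ (∀ n, b n ≠ 0) ∧
        ∀ n, ∀ᵐ u : ℝ ∂volume,
          pfsmKernel κ q b₁ F₁ F₂ F₃ 0 (c n * u)
            = b n * pfsmKernel κ q b₁ F₁ F₂ F₃ 0 (u + a n) + d n) := by
  set χ : ℝ := (if b₁ = 1 then (1:ℝ) else 0) * (if κ = 0 then (1:ℝ) else 0) * F₃ with hχdef
  constructor
  · intro h
    exact transfer (pfsmKernel κ q b₁ F₁ F₂ F₃ v) (pfsmKernel κ q b₁ F₁ F₂ F₃ 0)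
      (Real.exp (v * κ)) (Real.exp (-v)) (χ * v) (Real.exp_pos _).ne' (Real.exp_pos _)
      (fun w hw => pfsm_shift κ q b₁ F₁ F₂ F₃ v hw) h
  · intro h
    refine transfer (pfsmKernel κ q b₁ F₁ F₂ F₃ 0) (pfsmKernel κ q b₁ F₁ F₂ F₃ v)
      (Real.exp (v * κ))⁻¹ (Real.exp v) (-(χ * v) * (Real.exp (v * κ))⁻¹)
      (inv_ne_zero (Real.exp_pos _).ne') (Real.exp_pos _) (fun w hw => ?_) h
    have hvw : Real.exp v * w ≠ 0 := mul_ne_zero (Real.exp_pos v).ne' hw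
    have := pfsm_shift κ q b₁ F₁ F₂ F₃ v hvw
    have hsimp : Real.exp (-v) * (Real.exp v * w) = w := by
      rw [← mul_assoc, ← Real.exp_add]; simp
    rw [hsimp] at this
    have hE : Real.exp (v * κ) ≠ 0 := (Real.exp_pos _).ne'
    rw [← hχdef] at this
    rw [this]
    field_simp
    ring
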